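/- arXiv:1506.09197 — 4 statements merged into one kernel-verified Lean document; each statement's English description precedes it below -/
import Mathlib

section
/- Let δ : ℝ → ℝ be continuous, let t > 0 and λ > 0, and define v : [0, t] → ℝ by v(s) = exp( e^s ( ∫_s^t e^{-u} δ(u) du + e^{-t} · log λ ) ). Then v(t) = λ, v(s) > 0 for all s ∈ [0, t], and v satisfies the backward differential equation v'(s) = v(s) · log( e^{-δ(s)} · v(s) ) = v(s) · ( log v(s) − δ(s) ) for every s ∈ [0, t]. -/
open MeasureTheory Real

/-- Explicit solution of the backward equation for the Neveu branching mechanism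
`ψ(u) = u log u`: `v(s) = exp(e^s (∫_s^t e^{-u} δ(u) du + e^{-t} log λ))` satisfies
`v(t) = λ`, `v > 0` on `[0, t]`, and
`v'(s) = v(s) log(e^{-δ(s)} v(s)) = v(s) (log v(s) - δ(s))` on `[0, t]`. -/
theorem neveu_backward_solution
    (δ : ℝ → ℝ) (hδ : Continuous δ) (t lam : ℝ) (ht : 0 < t) (hlam : 0 < lam)
    (v : ℝ → ℝ)
    (hv : ∀ s : ℝ, v s = Real.exp (Real.exp s *
      ((∫ u in s..t, Real.exp (-u) * δ u) + Real.exp (-t) * Real.log lam))) :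
    v t = lam ∧
    (∀ s ∈ Set.Icc (0:ℝ) t, 0 < v s) ∧
    (∀ s ∈ Set.Icc (0:ℝ) t,
      HasDerivAt v (v s * Real.log (Real.exp (-δ s) * v s)) s) ∧
    (∀ s ∈ Set.Icc (0:ℝ) t,
      v s * Real.log (Real.exp (-δ s) * v s) = v s * (Real.log (v s) - δ s)) := by
  have hf : Continuous (fun u => Real.exp (-u) * δ u) :=
    ((Real.continuous_exp.comp continuous_neg)).mul hδ
  set F : ℝ → ℝ := fun s =>
    (∫ u in s..t, Real.exp (-u) * δ u) + Real.exp (-t) * Real.log lam with hF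
  have hvF : ∀ s, v s = Real.exp (Real.exp s * F s) := hv
  have hpos : ∀ s, 0 < v s := fun s => by rw [hvF s]; exact Real.exp_pos _
  have hlog : ∀ s, Real.log (v s) = Real.exp s * F s := fun s => by
    rw [hvF s, Real.log_exp]
  have hvt : v t = lam := by
    have hFt : F t = Real.exp (-t) * Real.log lam := by simp [hF]
    rw [hvF t, hFt, ← mul_assoc, ← Real.exp_add,
      add_neg_cancel, Real.exp_zero, one_mul, Real.exp_log hlam]
  have hderivF : ∀ s, HasDerivAt F (-(Real.exp (-s) * δ s)) s := by
    intro s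
    have h1 : HasDerivAt (fun s => ∫ u in s..t, Real.exp (-u) * δ u)
        (-(Real.exp (-s) * δ s)) s := by
      exact intervalIntegral.integral_hasDerivAt_left
        (hf.intervalIntegrable s t)
        (hf.stronglyMeasurableAtFilter _ _) hf.continuousAt
    exact h1.add_const (Real.exp (-t) * Real.log lam)
  have hderiv : ∀ s, HasDerivAt v (v s * (Real.log (v s) - δ s)) s := by
    intro s
    have h2 : HasDerivAt (fun s => Real.exp s * F s)
        (Real.exp s * F s + Real.exp s * (-(Real.exp (-s) * δ s))) s :=
      (Real.hasDerivAt_exp s).mul (hderivF s)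
    have h3 : HasDerivAt v
        (Real.exp (Real.exp s * F s) *
          (Real.exp s * F s + Real.exp s * (-(Real.exp (-s) * δ s)))) s := by
      have := h2.exp
      refine HasDerivAt.congr_of_eventuallyEq this ?_
      filter_upwards with x using (hvF x)
    have he : Real.exp s * (Real.exp (-s) * δ s) = δ s := by
      rw [← mul_assoc, ← Real.exp_add]; simp
    have : Real.exp (Real.exp s * F s) *
        (Real.exp s * F s + Real.exp s * (-(Real.exp (-s) * δ s)))
        = v s * (Real.log (v s) - δ s) := by
      rw [← hvF s, hlog s, mul_neg, he]; ring
    rwa [this] at h3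
  have heq : ∀ s, v s * Real.log (Real.exp (-δ s) * v s)
      = v s * (Real.log (v s) - δ s) := by
    intro s
    rw [Real.log_mul (Real.exp_ne_zero _) (hpos s).ne', Real.log_exp]
    ring
  exact ⟨hvt, fun s _ => hpos s, fun s _ => heq s ▸ hderiv s, fun s _ => heq s⟩
end

section
/- Let β ∈ (−1, 0) ∪ (0, 1), let c_β be a real number with β · c_β > 0, let α ∈ ℝ, t > 0, λ > 0, and let δ : ℝ → ℝ be continuous. Define v : [0, t] → ℝ by v(s) = e^{-α s} ( (λ e^{α t})^{-β} + β c_β ∫_s^t e^{-β (δ(u) + α u)} du )^{-1/β}. Then v(t) = λ, v(s) > 0 for all s ∈ [0, t], and v satisfies the backward differential equation v'(s) = −α v(s) + c_β · v(s)^{β+1} · e^{-β δ(s)} for every s ∈ [0, t]. -/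
open MeasureTheory Real

/-- Explicit solution of the backward equation for the stable branching mechanism
`ψ(u) = -α u + c_β u^{β+1}` with `β ∈ (-1,0) ∪ (0,1)` and `β c_β > 0`:
`v(s) = e^{-αs} ((λ e^{αt})^{-β} + β c_β ∫_s^t e^{-β(δ(u)+αu)} du)^{-1/β}` satisfies
`v(t) = λ`, `v > 0` on `[0, t]`, and
`v'(s) = -α v(s) + c_β v(s)^{β+1} e^{-β δ(s)}` on `[0, t]`. -/
theorem stable_backward_solution
    (β c α t lam : ℝ)
    (hβ : β ∈ Set.Ioo (-1 : ℝ) 1) (hβ0 : β ≠ 0) (hβc : 0 < β * c)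
    (ht : 0 < t) (hlam : 0 < lam)
    (δ : ℝ → ℝ) (hδ : Continuous δ)
    (v : ℝ → ℝ)
    (hv : ∀ s : ℝ, v s = Real.exp (-(α * s)) *
      ((lam * Real.exp (α * t)) ^ (-β) +
        β * c * ∫ u in s..t, Real.exp (-(β * (δ u + α * u)))) ^ (-1 / β)) :
    v t = lam ∧
    (∀ s ∈ Set.Icc (0:ℝ) t, 0 < v s) ∧
    (∀ s ∈ Set.Icc (0:ℝ) t,
      HasDerivAt v (-(α * v s) + c * v s ^ (β + 1) * Real.exp (-(β * δ s))) s) := by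
  set g : ℝ → ℝ := fun u => Real.exp (-(β * (δ u + α * u))) with hg
  have hgc : Continuous g := by
    apply Real.continuous_exp.comp
    exact (continuous_const.mul (hδ.add (continuous_const.mul continuous_id))).neg
  set A : ℝ := (lam * Real.exp (α * t)) ^ (-β) with hA
  have hA0 : 0 < A := Real.rpow_pos_of_pos (mul_pos hlam (Real.exp_pos _)) _
  set F : ℝ → ℝ := fun s => A + β * c * ∫ u in s..t, g u with hF
  have hvF : ∀ s, v s = Real.exp (-(α * s)) * F s ^ (-1/β) := hv
  have hFpos : ∀ s ∈ Set.Icc (0:ℝ) t, 0 < F s := by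
    intro s hs
    have h1 : 0 ≤ ∫ u in s..t, g u :=
      intervalIntegral.integral_nonneg hs.2 (fun u _ => (Real.exp_pos _).le)
    have := mul_nonneg hβc.le h1
    simp only [hF]
    nlinarith
  have hgs0 : ∀ s, g s = Real.exp (-(β * δ s)) * Real.exp (-(β*(α*s))) := by
    intro s; simp only [hg]; rw [← Real.exp_add]; congr 1; ring
  clear_value g A F
  refine ⟨?_, ?_, ?_⟩
  · have : F t = A := by simp [hF]
    rw [hvF, this, hA, ← Real.rpow_mul (mul_pos hlam (Real.exp_pos _)).le]
    have hβ1 : -β * (-1/β) = 1 := by field_simp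
    rw [hβ1, Real.rpow_one, mul_comm lam, ← mul_assoc, ← Real.exp_add]
    simp
  · intro s hs
    rw [hvF]
    exact mul_pos (Real.exp_pos _) (Real.rpow_pos_of_pos (hFpos s hs) _)
  · intro s hs
    have hFs := hFpos s hs
    have hint : HasDerivAt (fun x => ∫ u in x..t, g u) (-(g s)) s := by
      refine intervalIntegral.integral_hasDerivAt_left
        (hgc.intervalIntegrable s t) ?_ hgc.continuousAt
      exact hgc.stronglyMeasurableAtFilter _ _
    have hF' : HasDerivAt F (β * c * -(g s)) s := by
      rw [hF]; exact (hint.const_mul (β * c)).const_add A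
    have hrp : HasDerivAt (fun x => F x ^ (-1/β))
        ((β * c * -(g s)) * (-1/β) * F s ^ (-1/β - 1)) s :=
      hF'.rpow_const (Or.inl hFs.ne')
    have hne : HasDerivAt (fun x : ℝ => -(α * x)) (-α) s := by
      have h := ((hasDerivAt_id s).const_mul α).neg; rw [mul_one] at h; exact h
    have he : HasDerivAt (fun x => Real.exp (-(α * x))) (Real.exp (-(α * s)) * -α) s :=
      hne.exp
    have hprod := he.mul hrp
    have hveq : v = fun x => Real.exp (-(α * x)) * F x ^ (-1/β) := funext hvF
    rw [hveq]
    refine hprod.congr_deriv (Eq.symm ?_)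
    have hE : (0:ℝ) ≤ Real.exp (-(α * s)) := (Real.exp_pos _).le
    have hP : (0:ℝ) ≤ F s ^ (-1/β) := (Real.rpow_pos_of_pos hFs _).le
    have h2 : (-1/β) * (β+1) = -1/β - 1 := by field_simp; ring
    have h1 : (Real.exp (-(α*s)) * F s ^ (-1/β)) ^ (β+1)
        = Real.exp (-(α*s)*(β+1)) * F s ^ (-1/β - 1) := by
      rw [Real.mul_rpow hE hP, ← Real.exp_mul, ← Real.rpow_mul hFs.le, h2]
    rw [h1]
    have hX : Real.exp (-(α*s)*(β+1)) = Real.exp (-(α*s)) * Real.exp (-(β*(α*s))) := by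
      rw [← Real.exp_add]; congr 1; ring
    rw [hgs0 s, hX]
    field_simp
end

section
/- Let γ ≥ 0 and let μ be a Borel measure on (0, ∞) with ∫_{(0,∞)} (x ∧ x²) μ(dx) < ∞. Define ψ₀(λ) = γ² λ² + ∫_{(0,∞)} ( e^{-λ x} − 1 + λ x ) μ(dx) for λ > 0, and Φ(λ) = ψ₀(λ)/λ. Then for every λ > 0, ∫_0^∞ Φ(λ e^{-y}) dy = γ² λ + ∫_{(0,∞)} x · ( ∫_0^{λ x} (e^{-w} − 1 + w) w^{-2} dw ) μ(dx), and in particular, for every λ > 0, ∫_0^∞ Φ(λ e^{-y}) dy < ∞ if and only if ∫_{(1,∞)} x · log x μ(dx) < ∞. -/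
open MeasureTheory Real

/-- `h u = e^{-u} - 1 + u ≥ 0`. -/
lemma hh_nonneg (u : ℝ) : 0 ≤ Real.exp (-u) - 1 + u := by
  have := Real.add_one_le_exp (-u); linarith

lemma hh_le_self {u : ℝ} (hu : 0 ≤ u) : Real.exp (-u) - 1 + u ≤ u := by
  have h1 : Real.exp (-u) ≤ 1 := Real.exp_le_one_iff.2 (by linarith)
  linarith

lemma hh_le_sq {u : ℝ} (hu : 0 ≤ u) (hu1 : u ≤ 1) : Real.exp (-u) - 1 + u ≤ u ^ 2 := by
  have h1 : |Real.exp (-u) - 1 - (-u)| ≤ (-u) ^ 2 :=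
    Real.abs_exp_sub_one_sub_id_le (by rw [abs_neg, abs_of_nonneg hu]; exact hu1)
  have := abs_le.1 h1
  have h2 : (-u)^2 = u^2 := by ring
  linarith [this.2, h2.le]

lemma hh_le_min {u : ℝ} (hu : 0 ≤ u) : Real.exp (-u) - 1 + u ≤ min u (u ^ 2) := by
  rcases le_total u 1 with h | h
  · have : u ^ 2 ≤ u := by nlinarith
    rw [min_eq_right this]; exact hh_le_sq hu h
  · have : u ≤ u ^ 2 := by nlinarith
    rw [min_eq_left this]; exact hh_le_self hu

lemma hh_ge (u : ℝ) : u - 1 ≤ Real.exp (-u) - 1 + u := by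
  have := Real.exp_nonneg (-u); linarith

/-- the integrand `g w = h w / w²` is nonneg and ≤ 1 for `w ≥ 0`. -/
lemma gg_nonneg (w : ℝ) : 0 ≤ (Real.exp (-w) - 1 + w) / w ^ 2 :=
  div_nonneg (hh_nonneg w) (sq_nonneg w)

lemma gg_le_one {w : ℝ} (hw : 0 ≤ w) : (Real.exp (-w) - 1 + w) / w ^ 2 ≤ 1 := by
  rcases eq_or_lt_of_le hw with rfl | hw'
  · simp
  · rw [div_le_one (by positivity)]
    calc Real.exp (-w) - 1 + w ≤ min w (w ^ 2) := hh_le_min hw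
    _ ≤ w ^ 2 := min_le_right _ _

lemma gg_measurable : Measurable fun w : ℝ => (Real.exp (-w) - 1 + w) / w ^ 2 := by
  fun_prop

lemma gg_intervalIntegrable (a b : ℝ) (ha : 0 ≤ a) (hb : 0 ≤ b) :
    IntervalIntegrable (fun w : ℝ => (Real.exp (-w) - 1 + w) / w ^ 2) volume a b := by
  apply IntervalIntegrable.mono_fun (intervalIntegrable_const (c := (1:ℝ)))
    gg_measurable.aestronglyMeasurable
  refine (ae_restrict_iff' measurableSet_uIoc).2 (ae_of_all _ fun w hw => ?_)
  have hw0 : 0 ≤ w := le_trans (le_min ha hb) (le_of_lt hw.1)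
  simp only [Real.norm_eq_abs, abs_of_nonneg (gg_nonneg w), abs_one]
  exact gg_le_one hw0

noncomputable def FF (u : ℝ) : ℝ := ∫ w in (0:ℝ)..u, (Real.exp (-w) - 1 + w) / w ^ 2

lemma FF_nonneg {u : ℝ} (hu : 0 ≤ u) : 0 ≤ FF u :=
  intervalIntegral.integral_nonneg hu (fun w _ => gg_nonneg w)

lemma FF_le_self {u : ℝ} (hu : 0 ≤ u) : FF u ≤ u := by
  have : FF u ≤ ∫ _ in (0:ℝ)..u, (1:ℝ) :=
    intervalIntegral.integral_mono_on hu (gg_intervalIntegrable 0 u le_rfl hu)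
      intervalIntegrable_const (fun w hw => gg_le_one hw.1)
  simpa using this

lemma FF_split {a u : ℝ} (ha : 0 ≤ a) (hu : a ≤ u) :
    FF u = FF a + ∫ w in a..u, (Real.exp (-w) - 1 + w) / w ^ 2 :=
  (intervalIntegral.integral_add_adjacent_intervals
    (gg_intervalIntegrable 0 a le_rfl ha)
    (gg_intervalIntegrable a u ha (le_trans ha hu))).symm

lemma inv_intervalIntegrable {a u : ℝ} (ha : 1 ≤ a) (hu : a ≤ u) :
    IntervalIntegrable (fun w : ℝ => w⁻¹) volume a u := by
  apply intervalIntegral.intervalIntegrable_inv (f := fun x => x) ?_ continuousOn_id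
  intro x hx
  rw [Set.uIcc_of_le hu] at hx
  exact ne_of_gt (lt_of_lt_of_le (lt_of_lt_of_le one_pos ha) hx.1)

lemma FF_upper {u : ℝ} (hu : 1 ≤ u) : FF u ≤ 1 + Real.log u := by
  rw [FF_split zero_le_one hu]
  have h1 : FF 1 ≤ 1 := by simpa using FF_le_self zero_le_one
  have h2 : (∫ w in (1:ℝ)..u, (Real.exp (-w) - 1 + w) / w ^ 2) ≤ ∫ w in (1:ℝ)..u, w⁻¹ := by
    apply intervalIntegral.integral_mono_on hu
      (gg_intervalIntegrable 1 u zero_le_one (le_trans zero_le_one hu))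
      (inv_intervalIntegrable le_rfl hu)
    intro w hw
    have hw0 : (0:ℝ) < w := lt_of_lt_of_le one_pos hw.1
    rw [div_le_iff₀ (by positivity)]
    have : w⁻¹ * w ^ 2 = w := by field_simp
    rw [this]
    exact hh_le_self hw0.le
  have h3 : (∫ w in (1:ℝ)..u, w⁻¹) = Real.log u := by
    rw [integral_inv_of_pos one_pos (lt_of_lt_of_le one_pos hu)]
    simp
  linarith

lemma FF_upper' {u : ℝ} (hu : 0 ≤ u) : FF u ≤ 1 + max 0 (Real.log u) := by
  rcases le_total u 1 with h | h
  · have := FF_le_self hu; have := le_max_left (0:ℝ) (Real.log u); linarith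
  · have := FF_upper h
    have hl : 0 ≤ Real.log u := Real.log_nonneg h
    rw [max_eq_right hl]; exact this

lemma FF_lower {u : ℝ} (hu : 2 ≤ u) : (Real.log u - Real.log 2) / 2 ≤ FF u := by
  have h2 : (0:ℝ) ≤ 2 := by norm_num
  rw [FF_split h2 hu]
  have h0 : 0 ≤ FF 2 := FF_nonneg h2
  have hint : IntervalIntegrable (fun w : ℝ => 2⁻¹ * w⁻¹) volume 2 u :=
    (inv_intervalIntegrable one_le_two hu).const_mul _
  have h1 : (∫ w in (2:ℝ)..u, 2⁻¹ * w⁻¹) ≤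
      ∫ w in (2:ℝ)..u, (Real.exp (-w) - 1 + w) / w ^ 2 := by
    apply intervalIntegral.integral_mono_on hu hint
      (gg_intervalIntegrable 2 u h2 (le_trans h2 hu))
    intro w hw
    have hw0 : (0:ℝ) < w := lt_of_lt_of_le two_pos hw.1
    rw [le_div_iff₀ (by positivity)]
    have he : 2⁻¹ * w⁻¹ * w ^ 2 = w / 2 := by field_simp
    rw [he]
    have := hh_ge w
    have hw2 : (2:ℝ) ≤ w := hw.1
    linarith
  have h3 : (∫ w in (2:ℝ)..u, 2⁻¹ * w⁻¹) = (Real.log u - Real.log 2) / 2 := by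
    rw [intervalIntegral.integral_const_mul,
      integral_inv_of_pos two_pos (lt_of_lt_of_le two_pos hu),
      Real.log_div (by linarith : u ≠ 0) (by norm_num : (2:ℝ) ≠ 0)]
    ring
  linarith

lemma min_mono_on {c x : ℝ} (hc : 0 < c) (hx : c ≤ x) :
    min c (c ^ 2) ≤ min x (x ^ 2) :=
  le_min (le_trans (min_le_left _ _) hx)
    (le_trans (min_le_right _ _) (by nlinarith))

lemma meas_Ioi_lt_top {μ : Measure ℝ}
    (hμ : ∫⁻ x in Set.Ioi (0:ℝ), ENNReal.ofReal (min x (x ^ 2)) ∂μ < ⊤)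
    {c : ℝ} (hc : 0 < c) : μ (Set.Ioi c) < ⊤ := by
  set m := min c (c ^ 2) with hm
  have hm0 : 0 < m := lt_min hc (by positivity)
  have A : ENNReal.ofReal m * μ (Set.Ioi c) ≤
      ∫⁻ x in Set.Ioi c, ENNReal.ofReal (min x (x ^ 2)) ∂μ := by
    rw [← setLIntegral_const]
    refine lintegral_mono_ae ((ae_restrict_iff' measurableSet_Ioi).2
      (ae_of_all _ fun x hx => ENNReal.ofReal_le_ofReal (min_mono_on hc (le_of_lt hx))))
  have B : ∫⁻ x in Set.Ioi c, ENNReal.ofReal (min x (x ^ 2)) ∂μ ≤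
      ∫⁻ x in Set.Ioi (0:ℝ), ENNReal.ofReal (min x (x ^ 2)) ∂μ :=
    lintegral_mono' (Measure.restrict_mono (Set.Ioi_subset_Ioi hc.le) le_rfl) le_rfl
  have C : ENNReal.ofReal m * μ (Set.Ioi c) < ⊤ := lt_of_le_of_lt (A.trans B) hμ
  by_contra htop
  rw [not_lt, top_le_iff] at htop
  rw [htop, ENNReal.mul_top (by simp [hm0])] at C
  exact (lt_irrefl _ C).elim

lemma sigmaFinite_restrict_Ioi {μ : Measure ℝ}
    (hμ : ∫⁻ x in Set.Ioi (0:ℝ), ENNReal.ofReal (min x (x ^ 2)) ∂μ < ⊤) :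
    SigmaFinite (μ.restrict (Set.Ioi 0)) := by
  refine ⟨⟨⟨fun n => Set.Iic 0 ∪ Set.Ioi (1 / (n + 1) : ℝ), fun _ => trivial, fun n => ?_, ?_⟩⟩⟩
  · rw [Measure.restrict_apply' measurableSet_Ioi]
    refine lt_of_le_of_lt (measure_mono ?_) (meas_Ioi_lt_top hμ (c := 1/(n+1)) (by positivity))
    rintro x ⟨hx1 | hx1, hx2⟩
    · exact absurd (Set.mem_Ioi.1 hx2) (not_lt.2 hx1)
    · exact hx1
  · refine Set.eq_univ_of_forall fun x => ?_
    rcases le_or_gt x 0 with hx | hx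
    · exact Set.mem_iUnion.2 ⟨0, Or.inl hx⟩
    · obtain ⟨n, hn⟩ := exists_nat_one_div_lt hx
      exact Set.mem_iUnion.2 ⟨n, Or.inr hn⟩

lemma min_integrableOn {μ : Measure ℝ}
    (hμ : ∫⁻ x in Set.Ioi (0:ℝ), ENNReal.ofReal (min x (x ^ 2)) ∂μ < ⊤) :
    IntegrableOn (fun x : ℝ => min x (x ^ 2)) (Set.Ioi 0) μ := by
  refine ⟨(continuous_id.min (continuous_pow 2)).aestronglyMeasurable, ?_⟩
  have hnn : 0 ≤ᵐ[μ.restrict (Set.Ioi (0:ℝ))] fun x : ℝ => min x (x ^ 2) :=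
    (ae_restrict_iff' measurableSet_Ioi).2
      (ae_of_all _ fun x hx => le_min (le_of_lt hx) (by positivity))
  rw [hasFiniteIntegral_iff_ofReal hnn]
  exact hμ

lemma hh_bound_mu {s x : ℝ} (hs : 0 < s) (hx : 0 < x) :
    Real.exp (-(s * x)) - 1 + s * x ≤ max s (s ^ 2) * min x (x ^ 2) := by
  refine le_trans (hh_le_min (u := s * x) (by positivity)) ?_
  rcases le_total x 1 with h | h
  · rw [min_eq_right (show x ^ 2 ≤ x by nlinarith)]
    calc min (s * x) ((s * x) ^ 2) ≤ (s * x) ^ 2 := min_le_right _ _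
      _ = s ^ 2 * x ^ 2 := by ring
      _ ≤ max s (s ^ 2) * x ^ 2 := by nlinarith [le_max_right s (s ^ 2), sq_nonneg x]
  · rw [min_eq_left (show x ≤ x ^ 2 by nlinarith)]
    calc min (s * x) ((s * x) ^ 2) ≤ s * x := min_le_left _ _
      _ ≤ max s (s ^ 2) * x := by nlinarith [le_max_left s (s ^ 2)]

lemma hh_integrableOn {μ : Measure ℝ}
    (hμ : ∫⁻ x in Set.Ioi (0:ℝ), ENNReal.ofReal (min x (x ^ 2)) ∂μ < ⊤)
    {s : ℝ} (hs : 0 < s) :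
    IntegrableOn (fun x : ℝ => Real.exp (-(s * x)) - 1 + s * x) (Set.Ioi 0) μ := by
  refine Integrable.mono' ((min_integrableOn hμ).const_mul (max s (s ^ 2))) ?_ ?_
  · exact (Continuous.aestronglyMeasurable (by continuity))
  · refine (ae_restrict_iff' measurableSet_Ioi).2 (ae_of_all _ fun x hx => ?_)
    rw [Real.norm_eq_abs, abs_of_nonneg (hh_nonneg _)]
    exact hh_bound_mu hs hx

lemma image_exp_decay {c : ℝ} (hc : 0 < c) :
    (fun y : ℝ => c * Real.exp (-y)) '' Set.Ioi 0 = Set.Ioo 0 c := by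
  ext w
  constructor
  · rintro ⟨y, hy, rfl⟩
    have hy0 : (0:ℝ) < y := hy
    refine ⟨by positivity, ?_⟩
    have : Real.exp (-y) < 1 := Real.exp_lt_one_iff.2 (by linarith)
    exact mul_lt_of_lt_one_right hc this
  · rintro ⟨hw0, hwc⟩
    refine ⟨Real.log (c / w), ?_, ?_⟩
    · exact Real.log_pos ((one_lt_div hw0).2 hwc)
    · show c * Real.exp (-Real.log (c / w)) = w
      rw [Real.exp_neg, Real.exp_log (by positivity)]
      field_simp

lemma cov_inner {l x : ℝ} (hl : 0 < l) (hx : 0 < x) :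
    (∫⁻ y in Set.Ioi (0:ℝ), ENNReal.ofReal ((l * Real.exp (-y))⁻¹ *
        (Real.exp (-(l * Real.exp (-y) * x)) - 1 + l * Real.exp (-y) * x))) =
      ENNReal.ofReal (x * ∫ w in (0:ℝ)..(l * x),
        (Real.exp (-w) - 1 + w) / w ^ 2) := by
  set g : ℝ → ENNReal := fun w => ENNReal.ofReal (x * ((Real.exp (-w) - 1 + w) / w ^ 2))
    with hg
  set f : ℝ → ℝ := fun y => l * x * Real.exp (-y) with hf
  have hf' : ∀ y ∈ Set.Ioi (0:ℝ),
      HasDerivWithinAt f (-(l * x * Real.exp (-y))) (Set.Ioi 0) y := by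
    intro y _
    have : HasDerivAt f (l * x * (Real.exp (-y) * (-1))) y :=
      ((Real.hasDerivAt_exp (-y)).comp y ((hasDerivAt_id y).neg)).const_mul (l * x)
    have h2 : l * x * (Real.exp (-y) * (-1)) = -(l * x * Real.exp (-y)) := by ring
    exact (h2 ▸ this).hasDerivWithinAt
  have hinj : Set.InjOn f (Set.Ioi 0) := by
    have : Function.Injective f := by
      intro a b hab
      have := mul_left_cancel₀ (by positivity : l * x ≠ 0) hab
      have := Real.exp_injective this
      linarith [neg_injective this]
    exact this.injOn
  have key : ∫⁻ w in f '' Set.Ioi 0, g w =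
      ∫⁻ y in Set.Ioi (0:ℝ), ENNReal.ofReal |(-(l * x * Real.exp (-y)))| * g (f y) := by
    simpa only [ContinuousLinearMap.det_toSpanSingleton] using
      lintegral_image_eq_lintegral_abs_det_fderiv_mul volume measurableSet_Ioi
        (fun y hy => (hf' y hy).hasFDerivWithinAt) hinj g
  have himg : f '' Set.Ioi 0 = Set.Ioo 0 (l * x) := image_exp_decay (by positivity)
  rw [himg] at key
  -- identify the y-integrand
  have hcong : ∫⁻ y in Set.Ioi (0:ℝ),
      ENNReal.ofReal |(-(l * x * Real.exp (-y)))| * g (f y) =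
      ∫⁻ y in Set.Ioi (0:ℝ), ENNReal.ofReal ((l * Real.exp (-y))⁻¹ *
        (Real.exp (-(l * Real.exp (-y) * x)) - 1 + l * Real.exp (-y) * x)) := by
    refine setLIntegral_congr_fun measurableSet_Ioi (fun y _ => ?_)
    have hexp : (0:ℝ) < Real.exp (-y) := Real.exp_pos _
    rw [hg, abs_neg, abs_of_nonneg (by positivity : (0:ℝ) ≤ l * x * Real.exp (-y)),
      ← ENNReal.ofReal_mul (by positivity)]
    congr 1
    have harg : l * x * Real.exp (-y) = l * Real.exp (-y) * x := by ring
    rw [hf]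
    rw [harg]
    field_simp
  rw [hcong] at key
  rw [← key]
  -- now compute the Ioo-integral
  have hInt : IntegrableOn (fun w : ℝ => (Real.exp (-w) - 1 + w) / w ^ 2)
      (Set.Ioo 0 (l * x)) volume := by
    exact ((intervalIntegrable_iff_integrableOn_Ioc_of_le
      (by positivity : (0:ℝ) ≤ l * x)).1
      (gg_intervalIntegrable 0 (l * x) le_rfl (by positivity))).mono_set
      Set.Ioo_subset_Ioc_self
  have h1 : ENNReal.ofReal (∫ w in Set.Ioo (0:ℝ) (l * x),
      (Real.exp (-w) - 1 + w) / w ^ 2) =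
      ∫⁻ w in Set.Ioo (0:ℝ) (l * x), ENNReal.ofReal ((Real.exp (-w) - 1 + w) / w ^ 2) :=
    ofReal_integral_eq_lintegral_ofReal hInt (ae_of_all _ fun w => gg_nonneg w)
  have h2 : (∫ w in (0:ℝ)..(l * x), (Real.exp (-w) - 1 + w) / w ^ 2) =
      ∫ w in Set.Ioo (0:ℝ) (l * x), (Real.exp (-w) - 1 + w) / w ^ 2 := by
    rw [intervalIntegral.integral_of_le (by positivity : (0:ℝ) ≤ l * x),
      MeasureTheory.integral_Ioc_eq_integral_Ioo]
  have h3 : ∫⁻ w in Set.Ioo (0:ℝ) (l * x), g w =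
      ENNReal.ofReal x * ∫⁻ w in Set.Ioo (0:ℝ) (l * x),
        ENNReal.ofReal ((Real.exp (-w) - 1 + w) / w ^ 2) := by
    rw [← lintegral_const_mul' _ _ ENNReal.ofReal_ne_top]
    exact lintegral_congr fun w => ENNReal.ofReal_mul hx.le
  rw [h3, ← h1, h2, ENNReal.ofReal_mul hx.le]

theorem part1
    (γ : ℝ) (hγ : 0 ≤ γ) (μ : Measure ℝ)
    (hμ : ∫⁻ x in Set.Ioi (0:ℝ), ENNReal.ofReal (min x (x ^ 2)) ∂μ < ⊤)
    (ψ₀ Φ : ℝ → ℝ)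
    (hψ : ∀ l : ℝ, 0 < l → ψ₀ l = γ ^ 2 * l ^ 2 +
      ∫ x in Set.Ioi (0:ℝ), (Real.exp (-(l * x)) - 1 + l * x) ∂μ)
    (hΦ : ∀ l : ℝ, 0 < l → Φ l = ψ₀ l / l)
    (l : ℝ) (hl : 0 < l) :
    (∫⁻ y in Set.Ioi (0:ℝ), ENNReal.ofReal (Φ (l * Real.exp (-y)))) =
        ENNReal.ofReal (γ ^ 2 * l) +
          ∫⁻ x in Set.Ioi (0:ℝ),
            ENNReal.ofReal (x * ∫ w in (0:ℝ)..(l * x),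
              (Real.exp (-w) - 1 + w) / w ^ 2) ∂μ := by
  haveI : SigmaFinite (μ.restrict (Set.Ioi (0:ℝ))) := sigmaFinite_restrict_Ioi hμ
  set F : ℝ → ℝ → ENNReal := fun y x => ENNReal.ofReal ((l * Real.exp (-y))⁻¹ *
    (Real.exp (-(l * Real.exp (-y) * x)) - 1 + l * Real.exp (-y) * x)) with hF
  -- Step A : pointwise decomposition of the integrand
  have stepA : ∀ y ∈ Set.Ioi (0:ℝ), ENNReal.ofReal (Φ (l * Real.exp (-y))) =
      ENNReal.ofReal (γ ^ 2 * l * Real.exp (-y)) + ∫⁻ x in Set.Ioi (0:ℝ), F y x ∂μ := by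
    intro y _
    set s := l * Real.exp (-y) with hs
    have hs0 : 0 < s := by positivity
    set I := ∫ x in Set.Ioi (0:ℝ), (Real.exp (-(s * x)) - 1 + s * x) ∂μ with hI
    have hI0 : 0 ≤ I := setIntegral_nonneg measurableSet_Ioi (fun x _ => hh_nonneg _)
    have hPhi : Φ s = γ ^ 2 * s + s⁻¹ * I := by
      rw [hΦ s hs0, hψ s hs0, ← hI]
      field_simp
    rw [hPhi, ENNReal.ofReal_add (by positivity) (by positivity)]
    congr 1
    · rw [hs]; ring_nf
    · rw [ENNReal.ofReal_mul (by positivity),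
        ofReal_integral_eq_lintegral_ofReal (hh_integrableOn hμ hs0)
          (ae_of_all _ fun x => hh_nonneg _),
        ← lintegral_const_mul' _ _ ENNReal.ofReal_ne_top]
      exact lintegral_congr fun x => (ENNReal.ofReal_mul (by positivity)).symm
  rw [setLIntegral_congr_fun measurableSet_Ioi stepA]
  -- split the sum
  have hmeas1 : Measurable fun y : ℝ => ENNReal.ofReal (γ ^ 2 * l * Real.exp (-y)) :=
    (Continuous.measurable (by continuity)).ennreal_ofReal
  rw [lintegral_add_left hmeas1]
  congr 1
  -- Step C : the first integral
  · have hi : IntegrableOn (fun y : ℝ => Real.exp (-y)) (Set.Ioi 0) volume := by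
      simpa using exp_neg_integrableOn_Ioi 0 one_pos
    have : ∫⁻ y in Set.Ioi (0:ℝ), ENNReal.ofReal (γ ^ 2 * l * Real.exp (-y)) =
        ENNReal.ofReal (∫ y in Set.Ioi (0:ℝ), γ ^ 2 * l * Real.exp (-y)) :=
      (ofReal_integral_eq_lintegral_ofReal (hi.const_mul _)
        (ae_of_all _ fun y => by positivity)).symm
    rw [this, integral_const_mul, integral_exp_neg_Ioi_zero, mul_one]
  -- Step D + E : Tonelli and change of variables
  · have hcont : Continuous fun p : ℝ × ℝ => (l * Real.exp (-p.1))⁻¹ *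
        (Real.exp (-(l * Real.exp (-p.1) * p.2)) - 1 + l * Real.exp (-p.1) * p.2) := by
      have h1 : Continuous fun p : ℝ × ℝ => l * Real.exp (-p.1) :=
        continuous_const.mul (Real.continuous_exp.comp continuous_fst.neg)
      exact (h1.inv₀ fun p => by positivity).mul (by continuity)
    have hae : AEMeasurable (Function.uncurry F)
        ((volume.restrict (Set.Ioi (0:ℝ))).prod (μ.restrict (Set.Ioi (0:ℝ)))) :=
      ((ENNReal.continuous_ofReal.comp hcont).measurable.comp measurable_id).aemeasurable
    rw [lintegral_lintegral_swap hae]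
    refine setLIntegral_congr_fun measurableSet_Ioi (fun x hx => ?_)
    exact cov_inner hl hx

theorem part2
    (μ : Measure ℝ)
    (hμ : ∫⁻ x in Set.Ioi (0:ℝ), ENNReal.ofReal (min x (x ^ 2)) ∂μ < ⊤)
    (l : ℝ) (hl : 0 < l) :
    (∫⁻ x in Set.Ioi (0:ℝ),
        ENNReal.ofReal (x * ∫ w in (0:ℝ)..(l * x),
          (Real.exp (-w) - 1 + w) / w ^ 2) ∂μ) < ⊤ ↔
      ∫⁻ x in Set.Ioi (1:ℝ), ENNReal.ofReal (x * Real.log x) ∂μ < ⊤ := by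
  constructor
  · -- R < ⊤ → x log x integrable
    intro hR
    set M := max (2 / l) (Real.exp (2 * |Real.log (l / 2)|)) with hM
    have hM1 : 1 ≤ M :=
      le_trans (Real.one_le_exp (by positivity)) (le_max_right _ _)
    have hsplit : Set.Ioc (1:ℝ) M ∪ Set.Ioi M = Set.Ioi 1 :=
      Set.Ioc_union_Ioi_eq_Ioi hM1
    rw [← hsplit, lintegral_union measurableSet_Ioi (Set.Ioc_disjoint_Ioi le_rfl)]
    have hT1 : (∫⁻ x in Set.Ioc (1:ℝ) M, ENNReal.ofReal (x * Real.log x) ∂μ) < ⊤ := by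
      have hb : (∫⁻ x in Set.Ioc (1:ℝ) M, ENNReal.ofReal (x * Real.log x) ∂μ) ≤
          ∫⁻ _ in Set.Ioc (1:ℝ) M, ENNReal.ofReal (M * Real.log M) ∂μ := by
        refine lintegral_mono_ae ((ae_restrict_iff' measurableSet_Ioc).2
          (ae_of_all _ fun x hx => ENNReal.ofReal_le_ofReal ?_))
        have hx1 : 1 < x := hx.1
        have hxM : x ≤ M := hx.2
        have h1 : Real.log x ≤ Real.log M := Real.log_le_log (by linarith) hxM
        have h2 : 0 ≤ Real.log x := Real.log_nonneg hx1.le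
        nlinarith
      refine lt_of_le_of_lt hb ?_
      rw [setLIntegral_const]
      exact ENNReal.mul_lt_top ENNReal.ofReal_lt_top
        (lt_of_le_of_lt (measure_mono Set.Ioc_subset_Ioi_self) (meas_Ioi_lt_top hμ one_pos))
    have hT2 : (∫⁻ x in Set.Ioi M, ENNReal.ofReal (x * Real.log x) ∂μ) < ⊤ := by
      have hb : (∫⁻ x in Set.Ioi M, ENNReal.ofReal (x * Real.log x) ∂μ) ≤
          ∫⁻ x in Set.Ioi M, ENNReal.ofReal 4 *
            ENNReal.ofReal (x * ∫ w in (0:ℝ)..(l * x),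
              (Real.exp (-w) - 1 + w) / w ^ 2) ∂μ := by
        refine lintegral_mono_ae ((ae_restrict_iff' measurableSet_Ioi).2
          (ae_of_all _ fun x hx => ?_))
        have hxM : M < x := hx
        have hx1 : (1:ℝ) < x := lt_of_le_of_lt hM1 hxM
        have hx0 : (0:ℝ) < x := by linarith
        have hlx2 : (2:ℝ) ≤ l * x := by
          have h2l : 2 / l ≤ x := le_trans (le_max_left _ _) hxM.le
          calc (2:ℝ) = l * (2 / l) := by field_simp
            _ ≤ l * x := by nlinarith
        have hlogx : 2 * |Real.log (l / 2)| ≤ Real.log x := by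
          rw [← Real.exp_le_exp] at *
          have hh : Real.exp (2 * |Real.log (l / 2)|) ≤ x :=
            le_trans (le_max_right _ _) hxM.le
          calc Real.exp (2 * |Real.log (l / 2)|) ≤ x := hh
            _ = Real.exp (Real.log x) := (Real.exp_log hx0).symm
            _ ≤ Real.exp (Real.log x) := le_rfl
        have hFF : (Real.log (l * x) - Real.log 2) / 2 ≤ FF (l * x) := FF_lower hlx2
        have hlog : Real.log (l * x) = Real.log (l / 2) + Real.log 2 + Real.log x := by
          rw [Real.log_mul (ne_of_gt hl) (ne_of_gt hx0),
            Real.log_div (ne_of_gt hl) (by norm_num)]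
          ring
        have hFF4 : Real.log x / 4 ≤ FF (l * x) := by
          have habs : -|Real.log (l / 2)| ≤ Real.log (l / 2) := neg_abs_le _
          rw [hlog] at hFF
          linarith
        have hFFpos : 0 ≤ FF (l * x) := FF_nonneg (by positivity)
        have hfin : x * Real.log x ≤ 4 * (x * FF (l * x)) := by nlinarith
        rw [← ENNReal.ofReal_mul (by norm_num)]
        exact ENNReal.ofReal_le_ofReal (le_trans hfin le_rfl)
      refine lt_of_le_of_lt hb ?_
      rw [lintegral_const_mul' _ _ ENNReal.ofReal_ne_top]
      refine ENNReal.mul_lt_top ENNReal.ofReal_lt_top (lt_of_le_of_lt ?_ hR)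
      refine lintegral_mono' (Measure.restrict_mono (Set.Ioi_subset_Ioi ?_) le_rfl) le_rfl
      linarith
    exact ENNReal.add_lt_top.2 ⟨hT1, hT2⟩
  · -- x log x integrable → R < ⊤
    intro hB
    have hsplit : Set.Ioc (0:ℝ) 1 ∪ Set.Ioi 1 = Set.Ioi 0 :=
      Set.Ioc_union_Ioi_eq_Ioi zero_le_one
    rw [← hsplit, lintegral_union measurableSet_Ioi (Set.Ioc_disjoint_Ioi le_rfl)]
    have hT1 : (∫⁻ x in Set.Ioc (0:ℝ) 1,
        ENNReal.ofReal (x * ∫ w in (0:ℝ)..(l * x),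
          (Real.exp (-w) - 1 + w) / w ^ 2) ∂μ) < ⊤ := by
      have hb : (∫⁻ x in Set.Ioc (0:ℝ) 1,
          ENNReal.ofReal (x * ∫ w in (0:ℝ)..(l * x),
            (Real.exp (-w) - 1 + w) / w ^ 2) ∂μ) ≤
          ∫⁻ x in Set.Ioc (0:ℝ) 1, ENNReal.ofReal l * ENNReal.ofReal (min x (x ^ 2)) ∂μ := by
        refine lintegral_mono_ae ((ae_restrict_iff' measurableSet_Ioc).2
          (ae_of_all _ fun x hx => ?_))
        have hx0 : 0 < x := hx.1
        have hx1 : x ≤ 1 := hx.2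
        have hFF : FF (l * x) ≤ l * x := FF_le_self (by positivity)
        have hmin : min x (x ^ 2) = x ^ 2 := min_eq_right (by nlinarith)
        rw [← ENNReal.ofReal_mul hl.le, hmin]
        refine ENNReal.ofReal_le_ofReal ?_
        have : x * FF (l * x) ≤ x * (l * x) :=
          mul_le_mul_of_nonneg_left hFF hx0.le
        calc x * FF (l * x) ≤ x * (l * x) := this
          _ = l * x ^ 2 := by ring
      refine lt_of_le_of_lt hb ?_
      rw [lintegral_const_mul' _ _ ENNReal.ofReal_ne_top]
      refine ENNReal.mul_lt_top ENNReal.ofReal_lt_top (lt_of_le_of_lt ?_ hμ)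
      refine lintegral_mono' (Measure.restrict_mono ?_ le_rfl) le_rfl
      exact Set.Ioc_subset_Ioi_self
    have hT2 : (∫⁻ x in Set.Ioi (1:ℝ),
        ENNReal.ofReal (x * ∫ w in (0:ℝ)..(l * x),
          (Real.exp (-w) - 1 + w) / w ^ 2) ∂μ) < ⊤ := by
      set c := 1 + max 0 (Real.log l) with hc
      have hc0 : 0 ≤ c := by
        have := le_max_left (0:ℝ) (Real.log l); simp [hc]; linarith
      have hb : (∫⁻ x in Set.Ioi (1:ℝ),
          ENNReal.ofReal (x * ∫ w in (0:ℝ)..(l * x),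
            (Real.exp (-w) - 1 + w) / w ^ 2) ∂μ) ≤
          ∫⁻ x in Set.Ioi (1:ℝ),
            (ENNReal.ofReal (c * x) + ENNReal.ofReal (x * Real.log x)) ∂μ := by
        refine lintegral_mono_ae ((ae_restrict_iff' measurableSet_Ioi).2
          (ae_of_all _ fun x hx => ?_))
        have hx1 : (1:ℝ) < x := hx
        have hx0 : (0:ℝ) < x := by linarith
        have hlogx : 0 ≤ Real.log x := Real.log_nonneg hx1.le
        have hFF : FF (l * x) ≤ 1 + max 0 (Real.log (l * x)) :=
          FF_upper' (by positivity)
        have hmax : max 0 (Real.log (l * x)) ≤ max 0 (Real.log l) + Real.log x := by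
          rw [Real.log_mul (ne_of_gt hl) (ne_of_gt hx0)]
          rcases le_total 0 (Real.log l + Real.log x) with h | h
          · rw [max_eq_right h]
            have := le_max_right (0:ℝ) (Real.log l); linarith [le_max_left (0:ℝ) (Real.log l)]
          · rw [max_eq_left h]
            have := le_max_left (0:ℝ) (Real.log l); linarith
        have hkey : x * FF (l * x) ≤ c * x + x * Real.log x := by
          have h1 : FF (l * x) ≤ c + Real.log x := by
            rw [hc]; linarith
          calc x * FF (l * x) ≤ x * (c + Real.log x) :=
              mul_le_mul_of_nonneg_left h1 hx0.le
            _ = c * x + x * Real.log x := by ring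
        calc ENNReal.ofReal (x * FF (l * x)) ≤ ENNReal.ofReal (c * x + x * Real.log x) :=
            ENNReal.ofReal_le_ofReal hkey
          _ ≤ ENNReal.ofReal (c * x) + ENNReal.ofReal (x * Real.log x) :=
            ENNReal.ofReal_add_le
      refine lt_of_le_of_lt hb ?_
      have hmeas : Measurable fun x : ℝ => ENNReal.ofReal (c * x) :=
        (Continuous.measurable (by continuity)).ennreal_ofReal
      rw [lintegral_add_left hmeas]
      refine ENNReal.add_lt_top.2 ⟨?_, hB⟩
      have hb2 : (∫⁻ x in Set.Ioi (1:ℝ), ENNReal.ofReal (c * x) ∂μ) ≤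
          ∫⁻ x in Set.Ioi (1:ℝ), ENNReal.ofReal c * ENNReal.ofReal (min x (x ^ 2)) ∂μ := by
        refine lintegral_mono_ae ((ae_restrict_iff' measurableSet_Ioi).2
          (ae_of_all _ fun x hx => ?_))
        have hx1 : (1:ℝ) < x := hx
        have hmin : min x (x ^ 2) = x := min_eq_left (by nlinarith)
        rw [← ENNReal.ofReal_mul hc0, hmin]
      refine lt_of_le_of_lt hb2 ?_
      rw [lintegral_const_mul' _ _ ENNReal.ofReal_ne_top]
      refine ENNReal.mul_lt_top ENNReal.ofReal_lt_top (lt_of_le_of_lt ?_ hμ)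
      refine lintegral_mono' (Measure.restrict_mono ?_ le_rfl) le_rfl
      exact Set.Ioi_subset_Ioi zero_le_one
    exact ENNReal.add_lt_top.2 ⟨hT1, hT2⟩

/-- For the critical branching mechanism
`ψ₀(λ) = γ² λ² + ∫_{(0,∞)} (e^{-λx} - 1 + λx) μ(dx)` with
`∫ (x ∧ x²) μ(dx) < ∞` and `Φ(λ) = ψ₀(λ)/λ`, one has for every `λ > 0` the identity
`∫_0^∞ Φ(λ e^{-y}) dy = γ² λ + ∫_{(0,∞)} x (∫_0^{λx} (e^{-w} - 1 + w) w^{-2} dw) μ(dx)`,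
and `∫_0^∞ Φ(λ e^{-y}) dy < ∞` if and only if `∫_{(1,∞)} x log x μ(dx) < ∞`. -/
theorem Phi_integral_identity_and_xlogx_criterion
    (γ : ℝ) (hγ : 0 ≤ γ) (μ : Measure ℝ)
    (hμ : ∫⁻ x in Set.Ioi (0:ℝ), ENNReal.ofReal (min x (x ^ 2)) ∂μ < ⊤)
    (ψ₀ Φ : ℝ → ℝ)
    (hψ : ∀ l : ℝ, 0 < l → ψ₀ l = γ ^ 2 * l ^ 2 +
      ∫ x in Set.Ioi (0:ℝ), (Real.exp (-(l * x)) - 1 + l * x) ∂μ)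
    (hΦ : ∀ l : ℝ, 0 < l → Φ l = ψ₀ l / l) :
    ∀ l : ℝ, 0 < l →
      ((∫⁻ y in Set.Ioi (0:ℝ), ENNReal.ofReal (Φ (l * Real.exp (-y)))) =
        ENNReal.ofReal (γ ^ 2 * l) +
          ∫⁻ x in Set.Ioi (0:ℝ),
            ENNReal.ofReal (x * ∫ w in (0:ℝ)..(l * x),
              (Real.exp (-w) - 1 + w) / w ^ 2) ∂μ) ∧
      ((∫⁻ y in Set.Ioi (0:ℝ), ENNReal.ofReal (Φ (l * Real.exp (-y)))) < ⊤ ↔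
        ∫⁻ x in Set.Ioi (1:ℝ), ENNReal.ofReal (x * Real.log x) ∂μ < ⊤) := by
  intro l hl
  have h1 := part1 γ hγ μ hμ ψ₀ Φ hψ hΦ l hl
  refine ⟨h1, ?_⟩
  rw [h1, ENNReal.add_lt_top]
  constructor
  · rintro ⟨_, h⟩
    exact (part2 μ hμ l hl).1 h
  · intro h
    exact ⟨ENNReal.ofReal_lt_top, (part2 μ hμ l hl).2 h⟩
end

section
/- Let B = (B_s)_{s ≥ 0} be a standard one-dimensional Brownian motion, let η ∈ ℝ and t > 0. Then the random variable ∫_0^t e^{2(η s + B_s)} ds has the same distribution as the random variable e^{2(η t + B_t)} · ∫_0^t e^{-2(η s + B_s)} ds. -/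
open MeasureTheory ProbabilityTheory Filter Real Topology ENNReal NNReal

/-- A standard one-dimensional Brownian motion `B` on a probability space `(Ω, P)`:
continuous paths, `B 0 = 0`, independent increments, and Gaussian increments
`B t - B s ~ N(0, t - s)` for `0 ≤ s ≤ t`. -/
structure IsStandardBrownianMotion {Ω : Type} [MeasurableSpace Ω]
    (P : Measure Ω) (B : ℝ → Ω → ℝ) : Prop where
  isProbability : IsProbabilityMeasure P
  measurable : ∀ t : ℝ, Measurable (B t)
  cont : ∀ᵐ ω ∂P, Continuous fun s => B s ω
  start : ∀ᵐ ω ∂P, B 0 ω = 0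
  indepIncrements : ∀ (n : ℕ) (t : Fin (n + 1) → ℝ), Monotone t → (∀ i, 0 ≤ t i) →
    iIndepFun
      (fun i : Fin n => fun ω => B (t i.succ) ω - B (t i.castSucc) ω) P
  gaussianIncrements : ∀ s t : ℝ, 0 ≤ s → s ≤ t →
    P.map (fun ω => B t ω - B s ω) = gaussianReal 0 (Real.toNNReal (t - s))

/-- The exponential functional `I_t^{(η)} = ∫_0^t exp(2(η s + B_s)) ds` of Brownian
motion with drift `η`. -/
noncomputable def expFunctional {Ω : Type} (B : ℝ → Ω → ℝ) (η t : ℝ) (ω : Ω) : ℝ :=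
  ∫ s in (0:ℝ)..t, Real.exp (2 * (η * s + B s ω))

section Aux

lemma riemann_tendsto (g : ℝ → ℝ) (hg : Continuous g) {t : ℝ} (ht : 0 < t) :
    Tendsto (fun n : ℕ => ∑ k ∈ Finset.range n, (t / n) * g (k * t / n)) atTop
      (𝓝 (∫ s in (0:ℝ)..t, g s)) := by
  rw [Metric.tendsto_atTop]
  intro ε hε
  -- uniform continuity on [0, t]
  have huc : UniformContinuousOn g (Set.Icc 0 t) :=
    isCompact_Icc.uniformContinuousOn_of_continuous hg.continuousOn
  rw [Metric.uniformContinuousOn_iff] at huc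
  obtain ⟨δ, hδ, hδ'⟩ := huc (ε / (2 * t)) (by positivity)
  obtain ⟨N, hN⟩ := exists_nat_gt (t / δ)
  refine ⟨max N 1, fun n hn => ?_⟩
  have hn1 : 1 ≤ n := le_of_max_le_right hn
  have hnN : N ≤ n := le_of_max_le_left hn
  have hnpos : (0:ℝ) < n := by exact_mod_cast hn1
  have htn : t / n < δ := by
    rw [div_lt_iff₀ hnpos]
    have h1 : t / δ < n := lt_of_lt_of_le hN (by exact_mod_cast hnN)
    calc t = (t / δ) * δ := by field_simp
    _ < n * δ := by exact mul_lt_mul_of_pos_right h1 hδ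
    _ = δ * n := mul_comm _ _
  set u : ℕ → ℝ := fun k => k * t / n with hu
  have hstep : ∀ k : ℕ, u (k + 1) - u k = t / n := by
    intro k; simp only [hu]; push_cast; ring
  have hmono : ∀ k : ℕ, u k ≤ u (k + 1) := by
    intro k
    have := hstep k
    nlinarith [div_pos ht hnpos]
  have hint : ∀ k, k < n → IntervalIntegrable g volume (u k) (u (k + 1)) :=
    fun k _ => hg.intervalIntegrable _ _
  have hsplit : ∑ k ∈ Finset.range n, ∫ s in (u k)..(u (k+1)), g s = ∫ s in (u 0)..(u n), g s :=
    intervalIntegral.sum_integral_adjacent_intervals hint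
  have hu0 : u 0 = 0 := by simp [hu]
  have hun : u n = t := by
    simp only [hu]; field_simp
  rw [hu0, hun] at hsplit
  rw [← hsplit, dist_eq_norm, ← Finset.sum_sub_distrib]
  have hbound : ∀ k ∈ Finset.range n,
      ‖(t / n) * g (u k) - ∫ s in (u k)..(u (k+1)), g s‖ ≤ (ε / (2 * t)) * (t / n) := by
    intro k hk
    rw [Finset.mem_range] at hk
    have hconst : (t / n) * g (u k) = ∫ _s in (u k)..(u (k+1)), g (u k) := by
      rw [intervalIntegral.integral_const, hstep k, smul_eq_mul]
    rw [hconst, ← intervalIntegral.integral_sub (intervalIntegrable_const) (hint k hk)]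
    have hkmem : u k ∈ Set.Icc 0 t := by
      constructor
      · positivity
      · rw [hu]
        rw [div_le_iff₀ hnpos]
        have : (k:ℝ) ≤ n := by exact_mod_cast hk.le
        nlinarith
    have := intervalIntegral.norm_integral_le_of_norm_le_const
      (C := ε / (2 * t)) (f := fun s => g (u k) - g s) (a := u k) (b := u (k+1)) ?_
    · calc ‖∫ s in (u k)..(u (k+1)), (g (u k) - g s)‖ ≤ (ε / (2*t)) * |u (k+1) - u k| := this
      _ = (ε / (2*t)) * (t / n) := by rw [hstep k, abs_of_pos (div_pos ht hnpos)]
    · intro x hx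
      rw [Set.uIoc_of_le (hmono k)] at hx
      have hxmem : x ∈ Set.Icc 0 t := by
        constructor
        · have := hx.1; have h0 : 0 ≤ u k := by positivity
          linarith
        · have hx2 := hx.2
          have : u (k+1) ≤ t := by
            rw [hu, div_le_iff₀ hnpos]
            have : ((k:ℝ) + 1) ≤ n := by exact_mod_cast hk
            push_cast
            nlinarith
          linarith
      have hdist : dist (u k) x < δ := by
        rw [Real.dist_eq, abs_sub_comm, abs_of_nonneg (by linarith [hx.1] : (0:ℝ) ≤ x - u k)]
        have := hx.2; have := hstep k
        linarith
      have := hδ' _ hkmem _ hxmem hdist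
      rw [Real.dist_eq] at this
      exact le_of_lt this
  calc ‖∑ k ∈ Finset.range n, ((t / n) * g (u k) - ∫ s in (u k)..(u (k+1)), g s)‖
      ≤ ∑ k ∈ Finset.range n, ‖(t / n) * g (u k) - ∫ s in (u k)..(u (k+1)), g s‖ :=
        norm_sum_le _ _
    _ ≤ ∑ _k ∈ Finset.range n, (ε / (2 * t)) * (t / n) := Finset.sum_le_sum hbound
    _ = n * ((ε / (2 * t)) * (t / n)) := by rw [Finset.sum_const, Finset.card_range, nsmul_eq_mul]
    _ = ε / 2 := by field_simp
    _ < ε := by linarith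


lemma pathwise_reversal (η t : ℝ) (b : ℝ → ℝ) :
    ∫ s in (0:ℝ)..t, Real.exp (2 * (η * s + b s)) =
    Real.exp (2 * (η * t + b t)) *
      ∫ s in (0:ℝ)..t, Real.exp (-(2 * (η * s + (b t - b (t - s))))) := by
  have h := intervalIntegral.integral_comp_sub_left
    (a := 0) (b := t) (fun s => Real.exp (2 * (η * s + b s))) t
  simp only [sub_zero, sub_self] at h
  rw [← h]
  rw [← intervalIntegral.integral_const_mul]
  apply intervalIntegral.integral_congr
  intro s _
  simp only [← Real.exp_add]
  congr 1
  ring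


lemma T_eq' {n k : ℕ} (f : ℕ → ℝ) :
    (∑ i : Fin n, if (i : ℕ) < k then f i else 0) = ∑ i ∈ Finset.range (min k n), f i := by
  rw [Fin.sum_univ_eq_sum_range (fun i => if i < k then f i else 0) n, ← Finset.sum_filter]
  congr 1
  ext a
  simp only [Finset.mem_filter, Finset.mem_range, lt_min_iff]
  omega

lemma joint_law_eq_pi' {Ω : Type} [MeasurableSpace Ω] (P : Measure Ω)
    [IsProbabilityMeasure P] {n : ℕ} (D : Fin n → Ω → ℝ)
    (hmeas : ∀ i, Measurable (D i))
    (hindep : iIndepFun D P) :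
    P.map (fun ω i => D i ω) = Measure.pi (fun i => P.map (D i)) := by
  haveI : ∀ i, IsProbabilityMeasure (P.map (D i)) :=
    fun i => Measure.isProbabilityMeasure_map (hmeas i).aemeasurable
  refine (Measure.pi_eq fun s hs => ?_).symm
  rw [Measure.map_apply (measurable_pi_lambda _ hmeas) (MeasurableSet.univ_pi hs)]
  have hpre : (fun ω i => D i ω) ⁻¹' (Set.univ.pi s) = ⋂ i, D i ⁻¹' s i := by
    ext ω; simp [Set.mem_pi]
  rw [hpre]
  have := hindep.measure_inter_preimage_eq_mul (S := Finset.univ)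
    (sets := s) (fun i _ => hs i)
  simp only [Finset.mem_univ, Set.iInter_true] at this
  rw [this]
  refine Finset.prod_congr rfl fun i _ => ?_
  rw [Measure.map_apply (hmeas i) (hs i)]

lemma pi_map_rev' {n : ℕ} (ν : Measure ℝ) [IsProbabilityMeasure ν] :
    (Measure.pi fun _ : Fin n => ν).map (fun x (i : Fin n) => x i.rev) =
      Measure.pi (fun _ : Fin n => ν) := by
  refine (Measure.pi_eq fun s hs => ?_).symm
  have hmeas : Measurable (fun (x : Fin n → ℝ) (i : Fin n) => x i.rev) :=
    measurable_pi_lambda _ (fun i => measurable_pi_apply _)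
  rw [Measure.map_apply hmeas (MeasurableSet.univ_pi hs)]
  have hpre : (fun (x : Fin n → ℝ) (i : Fin n) => x i.rev) ⁻¹' (Set.univ.pi s)
      = Set.univ.pi (fun j => s j.rev) := by
    ext x
    simp only [Set.mem_preimage, Set.mem_pi, Set.mem_univ, true_imp_iff]
    constructor
    · intro h j; have := h j.rev; rwa [Fin.rev_rev] at this
    · intro h i; have := h i.rev; rwa [Fin.rev_rev] at this
  rw [hpre, Measure.pi_pi]
  exact Fintype.prod_equiv (Fin.revPerm) _ _ (fun i => rfl)

end Aux

lemma law_eq_discrete {Ω : Type} [MeasurableSpace Ω] (P : Measure Ω) (B : ℝ → Ω → ℝ)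
    (hB : IsStandardBrownianMotion P B) (η t : ℝ) (ht : 0 < t) (n : ℕ) (hn : 0 < n) :
    P.map (fun ω => Real.exp (2 * (η * t + (B t ω - B 0 ω))) *
      ∑ k ∈ Finset.range n, (t / n) *
        Real.exp (-(2 * (η * (k * t / n) + (B (k * t / n) ω - B 0 ω))))) =
    P.map (fun ω => Real.exp (2 * (η * t + (B t ω - B 0 ω))) *
      ∑ k ∈ Finset.range n, (t / n) *
        Real.exp (-(2 * (η * (k * t / n) + (B t ω - B (t - k * t / n) ω))))) := by
  haveI := hB.isProbability
  have hnR : (0:ℝ) < n := by exact_mod_cast hn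
  set u : ℕ → ℝ := fun k => k * t / n with hu
  have hu0 : u 0 = 0 := by simp [hu]
  have hun : u n = t := by simp only [hu]; field_simp
  have humono : ∀ j k : ℕ, j ≤ k → u j ≤ u k := by
    intro j k hjk
    simp only [hu]
    gcongr
  have hunonneg : ∀ k : ℕ, 0 ≤ u k := by intro k; positivity
  -- increments
  set D : Fin n → Ω → ℝ := fun i ω => B (u ((i : ℕ) + 1)) ω - B (u (i : ℕ)) ω with hD
  have hDmeas : ∀ i, Measurable (D i) := fun i => (hB.measurable _).sub (hB.measurable _)
  have hDvecmeas : Measurable (fun ω (i : Fin n) => D i ω) := measurable_pi_lambda _ hDmeas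
  -- independence
  have hindep : iIndepFun D P := by
    have h := hB.indepIncrements n (fun j : Fin (n+1) => u (j : ℕ))
      (fun a b hab => humono _ _ (by exact_mod_cast hab)) (fun j => hunonneg _)
    have hfun : (fun i : Fin n => fun ω => B (u ((i.succ : Fin (n+1)) : ℕ)) ω
        - B (u ((i.castSucc : Fin (n+1)) : ℕ)) ω) = D := by
      funext i ω
      simp only [hD, Fin.val_succ, Fin.coe_castSucc]
    rwa [hfun] at h
  -- marginals
  set ν : Measure ℝ := gaussianReal 0 (Real.toNNReal (t / n)) with hν
  have hmarg : ∀ i : Fin n, P.map (D i) = ν := by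
    intro i
    have h := hB.gaussianIncrements (u i) (u ((i:ℕ)+1)) (hunonneg _) (humono _ _ (Nat.le_succ _))
    have harg : u ((i:ℕ)+1) - u (i:ℕ) = t / n := by
      simp only [hu]; push_cast; ring
    rw [harg] at h
    exact h
  have hjoint : P.map (fun ω i => D i ω) = Measure.pi (fun _ : Fin n => ν) := by
    rw [joint_law_eq_pi' P D hDmeas hindep]
    congr 1
    exact funext hmarg
  -- the functional
  set T : ℕ → (Fin n → ℝ) → ℝ := fun k d => ∑ i : Fin n, if (i : ℕ) < k then d i else 0
    with hT
  set F : (Fin n → ℝ) → ℝ := fun d => Real.exp (2 * (η * t + T n d)) *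
      ∑ k ∈ Finset.range n, (t / n) * Real.exp (-(2 * (η * (k * t / n) + T k d))) with hF
  have hTmeas : ∀ k, Measurable (T k) := by
    intro k
    apply Finset.measurable_sum
    intro i _
    by_cases h : (i : ℕ) < k
    · simpa [h] using measurable_pi_apply i
    · simp [h]
  have hFmeas : Measurable F := by
    refine Measurable.mul ?_ (Finset.measurable_sum _ fun k _ => ?_)
    · exact (((hTmeas n).const_add (η*t)).const_mul 2).exp
    · exact ((((hTmeas k).const_add (η*(k*t/n))).const_mul 2).neg.exp).const_mul (t/n)
  -- telescoping identities
  have hTD : ∀ (k : ℕ), k ≤ n → ∀ ω, T k (fun i => D i ω) = B (u k) ω - B 0 ω := by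
    intro k hk ω
    have : T k (fun i => D i ω) = ∑ i ∈ Finset.range (min k n),
        (fun j => B (u (j+1)) ω - B (u j) ω) i :=
      T_eq' (n := n) (k := k) (fun j => B (u (j+1)) ω - B (u j) ω)
    rw [this, min_eq_left hk, Finset.sum_range_sub (fun j => B (u j) ω), hu0]
  have hTDrev : ∀ (k : ℕ), k ≤ n → ∀ ω,
      T k (fun i => D i.rev ω) = B t ω - B (t - u k) ω := by
    intro k hk ω
    have h1 : T k (fun i => D i.rev ω) = ∑ i ∈ Finset.range (min k n),
        (fun j => B (u (n - 1 - j + 1)) ω - B (u (n - 1 - j)) ω) i := by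
      rw [hT]
      have : ∀ i : Fin n, D i.rev ω
          = (fun j => B (u (n - 1 - j + 1)) ω - B (u (n - 1 - j)) ω) (i : ℕ) := by
        intro i
        simp only [hD, Fin.val_rev]
        have e : n - ((i:ℕ)+1) = n - 1 - (i:ℕ) := by omega
        rw [e]
      simp_rw [this]
      exact T_eq' (n := n) (k := k) (fun j => B (u (n - 1 - j + 1)) ω - B (u (n - 1 - j)) ω)
    rw [h1, min_eq_left hk]
    have h2 : ∀ j ∈ Finset.range k, B (u (n-1-j+1)) ω - B (u (n-1-j)) ω
        = (fun j => - B (u (n - j)) ω) (j+1) - (fun j => - B (u (n - j)) ω) j := by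
      intro j hj
      rw [Finset.mem_range] at hj
      simp only
      have e1 : n - 1 - j + 1 = n - j := by omega
      have e2 : n - 1 - j = n - (j+1) := by omega
      rw [e1, e2]; ring
    rw [Finset.sum_congr rfl h2, Finset.sum_range_sub (fun j => - B (u (n - j)) ω)]
    have e3 : u (n - k) = t - u k := by
      simp only [hu]
      rw [Nat.cast_sub hk]
      field_simp
    simp only [Nat.sub_zero, e3, hun]
    ring
  -- X = F ∘ Dvec
  have hX : (fun ω => Real.exp (2 * (η * t + (B t ω - B 0 ω))) *
      ∑ k ∈ Finset.range n, (t / n) *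
        Real.exp (-(2 * (η * (k * t / n) + (B (k * t / n) ω - B 0 ω)))))
      = F ∘ (fun ω i => D i ω) := by
    funext ω
    simp only [Function.comp_apply, hF]
    rw [hTD n le_rfl ω, hun]
    congr 1
    refine Finset.sum_congr rfl fun k hk => ?_
    rw [Finset.mem_range] at hk
    rw [hTD k hk.le ω]
  -- Y = (F ∘ rev) ∘ Dvec
  have hY : (fun ω => Real.exp (2 * (η * t + (B t ω - B 0 ω))) *
      ∑ k ∈ Finset.range n, (t / n) *
        Real.exp (-(2 * (η * (k * t / n) + (B t ω - B (t - k * t / n) ω)))))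
      = (F ∘ (fun x (i : Fin n) => x i.rev)) ∘ (fun ω i => D i ω) := by
    funext ω
    simp only [Function.comp_apply, hF]
    have hrevn := hTDrev n le_rfl ω
    rw [hun, sub_self] at hrevn
    rw [hrevn]
    congr 1
    refine Finset.sum_congr rfl fun k hk => ?_
    rw [Finset.mem_range] at hk
    rw [hTDrev k hk.le ω]
  have hrevmeas : Measurable (fun (x : Fin n → ℝ) (i : Fin n) => x i.rev) :=
    measurable_pi_lambda _ (fun i => measurable_pi_apply _)
  rw [hX, hY, ← Measure.map_map hFmeas hDvecmeas,
    ← Measure.map_map (hFmeas.comp hrevmeas) hDvecmeas, hjoint,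
    ← Measure.map_map hFmeas hrevmeas, pi_map_rev']


/-- Time-reversal identity: `∫_0^t e^{2(ηs + B_s)} ds` has the same law as
`e^{2(ηt + B_t)} ∫_0^t e^{-2(ηs + B_s)} ds`. -/
theorem time_reversal_identity_in_law
    {Ω : Type} [MeasurableSpace Ω] (P : Measure Ω) (B : ℝ → Ω → ℝ)
    (hB : IsStandardBrownianMotion P B) (η t : ℝ) (ht : 0 < t) :
    P.map (fun ω => ∫ s in (0:ℝ)..t, Real.exp (2 * (η * s + B s ω))) =
    P.map (fun ω => Real.exp (2 * (η * t + B t ω)) *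
      ∫ s in (0:ℝ)..t, Real.exp (-(2 * (η * s + B s ω)))) := by
  haveI := hB.isProbability
  set A : Ω → ℝ := fun ω => ∫ s in (0:ℝ)..t, Real.exp (2 * (η * s + B s ω)) with hA
  set R : Ω → ℝ := fun ω => Real.exp (2 * (η * t + B t ω)) *
      ∫ s in (0:ℝ)..t, Real.exp (-(2 * (η * s + B s ω))) with hR
  set X : ℕ → Ω → ℝ := fun n ω => Real.exp (2 * (η * t + (B t ω - B 0 ω))) *
      ∑ k ∈ Finset.range n, (t / n) *
        Real.exp (-(2 * (η * (k * t / n) + (B (k * t / n) ω - B 0 ω)))) with hX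
  set Y : ℕ → Ω → ℝ := fun n ω => Real.exp (2 * (η * t + (B t ω - B 0 ω))) *
      ∑ k ∈ Finset.range n, (t / n) *
        Real.exp (-(2 * (η * (k * t / n) + (B t ω - B (t - k * t / n) ω)))) with hY
  have hXmeas : ∀ n, Measurable (X n) := by
    intro n
    refine Measurable.mul ?_ (Finset.measurable_sum _ fun k _ => ?_)
    · exact ((((hB.measurable t).sub (hB.measurable 0)).const_add (η*t)).const_mul 2).exp
    · exact (((((hB.measurable _).sub (hB.measurable 0)).const_add
        (η*(k*t/n))).const_mul 2).neg.exp).const_mul (t/n)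
  have hYmeas : ∀ n, Measurable (Y n) := by
    intro n
    refine Measurable.mul ?_ (Finset.measurable_sum _ fun k _ => ?_)
    · exact ((((hB.measurable t).sub (hB.measurable 0)).const_add (η*t)).const_mul 2).exp
    · exact (((((hB.measurable t).sub (hB.measurable _)).const_add
        (η*(k*t/n))).const_mul 2).neg.exp).const_mul (t/n)
  -- a.e. convergence of X n to R
  have hXtend : ∀ᵐ ω ∂P, Tendsto (fun n => X n ω) atTop (𝓝 (R ω)) := by
    filter_upwards [hB.cont, hB.start] with ω hc h0
    have hg : Continuous fun s => Real.exp (-(2 * (η * s + B s ω))) :=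
      Real.continuous_exp.comp
        ((continuous_const.mul ((continuous_const.mul continuous_id).add hc)).neg)
    have hriem := riemann_tendsto _ hg ht
    have := hriem.const_mul (Real.exp (2 * (η * t + B t ω)))
    simp only [hX, hR, h0, sub_zero]
    exact this
  -- a.e. convergence of Y n to A
  have hYtend : ∀ᵐ ω ∂P, Tendsto (fun n => Y n ω) atTop (𝓝 (A ω)) := by
    filter_upwards [hB.cont, hB.start] with ω hc h0
    have hg : Continuous fun s => Real.exp (-(2 * (η * s + (B t ω - B (t - s) ω)))) := by
      refine Real.continuous_exp.comp (Continuous.neg ?_)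
      exact continuous_const.mul ((continuous_const.mul continuous_id).add
        (continuous_const.sub (hc.comp (continuous_const.sub continuous_id))))
    have hriem := riemann_tendsto _ hg ht
    have h2 := hriem.const_mul (Real.exp (2 * (η * t + B t ω)))
    have h3 : A ω = Real.exp (2 * (η * t + B t ω)) *
        ∫ s in (0:ℝ)..t, Real.exp (-(2 * (η * s + (B t ω - B (t - s) ω)))) :=
      pathwise_reversal η t (fun s => B s ω)
    rw [hY]
    simp only [h0, sub_zero]
    rw [h3]
    exact h2
  have hAmeas : AEMeasurable A P :=
    aemeasurable_of_tendsto_metrizable_ae atTop (fun n => (hYmeas n).aemeasurable) hYtend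
  have hRmeas : AEMeasurable R P :=
    aemeasurable_of_tendsto_metrizable_ae atTop (fun n => (hXmeas n).aemeasurable) hXtend
  haveI : IsProbabilityMeasure (P.map A) := Measure.isProbabilityMeasure_map hAmeas
  haveI : IsProbabilityMeasure (P.map R) := Measure.isProbabilityMeasure_map hRmeas
  refine ext_of_forall_lintegral_eq_of_IsFiniteMeasure fun f => ?_
  have hfmeas : Measurable fun x : ℝ => (f x : ℝ≥0∞) :=
    measurable_coe_nnreal_ennreal.comp (map_continuous f).measurable
  rw [lintegral_map' hfmeas.aemeasurable hAmeas, lintegral_map' hfmeas.aemeasurable hRmeas]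
  -- dominated convergence on both sides
  have hbound : ∀ (g : Ω → ℝ), (fun ω => (f (g ω) : ℝ≥0∞)) ≤ᶠ[ae P] fun _ => (nndist 0 f : ℝ≥0∞) := by
    intro g
    refine Eventually.of_forall fun ω => ?_
    rw [ENNReal.coe_le_coe]
    exact f.apply_le_nndist_zero _
  have hfin : ∫⁻ _ω, (nndist 0 f : ℝ≥0∞) ∂P ≠ ⊤ := by
    rw [lintegral_const]
    simp only [measure_univ, mul_one]
    exact ENNReal.coe_ne_top
  have h1 : Tendsto (fun n => ∫⁻ ω, (f (Y (n+1) ω) : ℝ≥0∞) ∂P) atTop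
      (𝓝 (∫⁻ ω, (f (A ω) : ℝ≥0∞) ∂P)) := by
    refine tendsto_lintegral_of_dominated_convergence _ (fun n => hfmeas.comp (hYmeas (n+1)))
      (fun n => hbound _) hfin ?_
    filter_upwards [hYtend] with ω hω
    exact (ENNReal.continuous_coe.tendsto _).comp
      (((map_continuous f).tendsto _).comp (hω.comp (tendsto_add_atTop_nat 1)))
  have h2 : Tendsto (fun n => ∫⁻ ω, (f (X (n+1) ω) : ℝ≥0∞) ∂P) atTop
      (𝓝 (∫⁻ ω, (f (R ω) : ℝ≥0∞) ∂P)) := by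
    refine tendsto_lintegral_of_dominated_convergence _ (fun n => hfmeas.comp (hXmeas (n+1)))
      (fun n => hbound _) hfin ?_
    filter_upwards [hXtend] with ω hω
    exact (ENNReal.continuous_coe.tendsto _).comp
      (((map_continuous f).tendsto _).comp (hω.comp (tendsto_add_atTop_nat 1)))
  have heq : ∀ n : ℕ, ∫⁻ ω, (f (Y (n+1) ω) : ℝ≥0∞) ∂P = ∫⁻ ω, (f (X (n+1) ω) : ℝ≥0∞) ∂P := by
    intro n
    have hlaw := law_eq_discrete P B hB η t ht (n+1) (Nat.succ_pos n)
    rw [← lintegral_map hfmeas (hYmeas (n+1)), ← lintegral_map hfmeas (hXmeas (n+1))]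
    rw [hX, hY, ← hlaw]
  rw [funext heq] at h1
  exact tendsto_nhds_unique h1 h2
end
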